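/- The circulant graph G_{{2,3}} embeds as a subgraph into the circulant graph G_{{3,4,5}}: G_{{2,3}} ↪ G_{{3,4,5}}. Moreover, G_{{3,4}} embeds as a subgraph into G_{{2,3,5}}: G_{{3,4}} ↪ G_{{2,3,5}}. -/

import Mathlib

open SimpleGraph

/-- The circulant graph `G_D` on `ZMod 10`: distinct `i, j` are adjacent iff
`i - j ∈ D` or `j - i ∈ D`. -/
def circ (D : Set (ZMod 10)) : SimpleGraph (ZMod 10) :=
  SimpleGraph.fromRel (fun i j => i - j ∈ D)


private def f1 : ZMod 10 → ZMod 10 := ![0,1,3,5,7,9,2,4,6,8]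
private def f2 : ZMod 10 → ZMod 10 := ![0,1,4,5,3,9,2,8,6,7]

private instance (D : Set (ZMod 10)) [DecidablePred (· ∈ D)] : DecidableRel (circ D).Adj :=
  fun a b => decidable_of_iff _ (SimpleGraph.fromRel_adj _ a b).symm

/-- The Petersen graph: vertices are the 2-element subsets of a 5-element set,
adjacent iff disjoint. -/
def petersen : SimpleGraph {s : Finset (Fin 5) // s.card = 2} where
  Adj a b := Disjoint a.1 b.1
  symm := ⟨fun a b h => h.symm⟩
  loopless := ⟨fun a h => by
    have h0 : a.1 = ∅ := by simpa using disjoint_self.mp h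
    have h2 := a.2
    rw [h0] at h2
    simp at h2⟩

/-- Subgraph embeddings: `G_{{2,3}} ↪ G_{{3,4,5}}` and `G_{{3,4}} ↪ G_{{2,3,5}}`. -/
theorem stmt_15 :
    (∃ f : circ {2, 3} →g circ {3, 4, 5}, Function.Injective f) ∧
    (∃ f : circ {3, 4} →g circ {2, 3, 5}, Function.Injective f) := by
  exact ⟨⟨⟨f1, fun {a b} h => by revert a b h; decide⟩, by decide⟩,
    ⟨⟨f2, fun {a b} h => by revert a b h; decide⟩, by decide⟩⟩
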